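/- Assume the limiting value g(∞) = lim_{r→∞} g(r) exists and is finite. Then for every compact set X ⊂ ℝⁿ, the function (x, y) ↦ Γ(x+y) − Γ(y) is continuous and bounded on X × ℝⁿ. -/
import Mathlib


open MeasureTheory Filter Set Topology

/-- The energy kernel `Γ(x) = G(|x|)`, where `G(r) = ∫₀^r g(s) ds`. -/
noncomputable def Gam {n : ℕ} (g : ℝ → ℝ)
    (x : EuclideanSpace ℝ (Fin n)) : ℝ :=
  ∫ s in (0:ℝ)..‖x‖, g s

theorem renormalized_kernel_continuous_bounded {n : ℕ} (hn : 1 ≤ n)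
    (g : ℝ → ℝ) (hg_cont : ContinuousOn g (Ici 0)) (hg0 : g 0 = 0)
    (ginf : ℝ) (hg_lim : Tendsto g atTop (𝓝 ginf))
    (X : Set (EuclideanSpace ℝ (Fin n))) (hX : IsCompact X) :
    ContinuousOn
      (fun p : EuclideanSpace ℝ (Fin n) × EuclideanSpace ℝ (Fin n) =>
        Gam g (p.1 + p.2) - Gam g p.2) (X ×ˢ Set.univ) ∧
    ∃ C : ℝ, ∀ x ∈ X, ∀ y : EuclideanSpace ℝ (Fin n),
      |Gam g (x + y) - Gam g y| ≤ C := by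
  -- Step 1: g is bounded on [0, ∞)
  obtain ⟨A, hA⟩ : ∃ A : ℝ, ∀ s ≥ A, dist (g s) ginf < 1 := by
    have := (Metric.tendsto_atTop.mp hg_lim) 1 one_pos
    exact this
  set A' : ℝ := max A 0 with hA'
  obtain ⟨M1, hM1⟩ := (isCompact_Icc (a := (0:ℝ)) (b := A')).exists_bound_of_continuousOn
    (hg_cont.mono (fun x hx => hx.1))
  set M : ℝ := max (max M1 (|ginf| + 1)) 0 with hM
  have hM0 : 0 ≤ M := le_max_right _ _
  have hMbound : ∀ s : ℝ, 0 ≤ s → |g s| ≤ M := by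
    intro s hs
    rcases le_or_gt s A' with h | h
    · exact le_trans (hM1 s ⟨hs, h⟩) (le_trans (le_max_left _ _) (le_max_left _ _))
    · have hsA : s ≥ A := le_of_lt (lt_of_le_of_lt (le_max_left A 0) h)
      have h1 : |g s - ginf| < 1 := hA s hsA
      have : |g s| ≤ |g s - ginf| + |ginf| := by
        calc |g s| = |(g s - ginf) + ginf| := by ring_nf
        _ ≤ |g s - ginf| + |ginf| := abs_add_le _ _
      have : |g s| ≤ |ginf| + 1 := by linarith [abs_nonneg (g s - ginf)]
      exact le_trans this (le_trans (le_max_right _ _) (le_max_left _ _))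
  -- Step 2: integrability on nonnegative intervals
  have hInt : ∀ a b : ℝ, 0 ≤ a → 0 ≤ b → IntervalIntegrable g volume a b := by
    intro a b ha hb
    apply (hg_cont.mono ?_).intervalIntegrable
    intro x hx
    rw [Set.uIcc] at hx
    exact le_trans (le_min ha hb) hx.1
  -- Step 3: difference formula
  have hdiff : ∀ a b : ℝ, 0 ≤ a → 0 ≤ b →
      (∫ s in (0:ℝ)..b, g s) - (∫ s in (0:ℝ)..a, g s) = ∫ s in a..b, g s := by
    intro a b ha hb
    rw [← intervalIntegral.integral_add_adjacent_intervals (hInt 0 a le_rfl ha)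
      (hInt a b ha hb)]
    ring
  -- Step 4: bound on integrals
  have hbound : ∀ a b : ℝ, 0 ≤ a → 0 ≤ b →
      |∫ s in a..b, g s| ≤ M * |b - a| := by
    intro a b ha hb
    rw [← Real.norm_eq_abs]
    apply intervalIntegral.norm_integral_le_of_norm_le_const
    intro x hx
    apply hMbound
    rcases Set.mem_uIoc.mp hx with h | h
    · exact le_of_lt (lt_of_le_of_lt ha h.1)
    · exact le_of_lt (lt_of_le_of_lt hb h.1)
  -- Step 5: primitive is Lipschitz on [0, ∞), hence continuous
  set F : ℝ → ℝ := fun r => ∫ s in (0:ℝ)..r, g s with hF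
  have hFlip : LipschitzOnWith (Real.toNNReal M) F (Ici 0) := by
    apply LipschitzOnWith.of_dist_le_mul
    intro a ha b hb
    rw [Real.dist_eq, Real.dist_eq, Real.coe_toNNReal M hM0]
    calc |F a - F b| = |∫ s in b..a, g s| := by rw [hdiff b a hb ha]
    _ ≤ M * |a - b| := hbound b a hb ha
  have hGcont : Continuous (Gam g (n := n)) := by
    have : ContinuousOn (fun x : EuclideanSpace ℝ (Fin n) => F ‖x‖) univ :=
      hFlip.continuousOn.comp continuous_norm.continuousOn
        (fun x _ => norm_nonneg x)
    exact continuousOn_univ.mp this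
  constructor
  · exact (((hGcont.comp (continuous_fst.add continuous_snd)).sub
      (hGcont.comp continuous_snd)).continuousOn)
  · obtain ⟨R, hR⟩ := hX.isBounded.exists_norm_le
    refine ⟨M * R, fun x hx y => ?_⟩
    have key : Gam g (x + y) - Gam g y = ∫ s in (‖y‖)..(‖x + y‖), g s :=
      hdiff ‖y‖ ‖x + y‖ (norm_nonneg _) (norm_nonneg _)
    rw [key]
    calc |∫ s in (‖y‖)..(‖x + y‖), g s| ≤ M * |‖x + y‖ - ‖y‖| :=
        hbound _ _ (norm_nonneg _) (norm_nonneg _)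
    _ ≤ M * ‖x‖ := by
        apply mul_le_mul_of_nonneg_left _ hM0
        have := abs_norm_sub_norm_le (x + y) y
        simpa using this
    _ ≤ M * R := mul_le_mul_of_nonneg_left (hR x hx) hM0
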